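/- Let k ≥ 1 and r ≥ 3 be integers, let G₁, …, G_r be groups, let G = G₁ × ⋯ × G_r, and let ψ : G → ℤ^k be a surjective group homomorphism. Assume that there are at least three distinct indices i ∈ {1, …, r} such that the restriction of ψ to the factor G_i (embedded in G with trivial coordinates elsewhere) is surjective onto ℤ^k. Then the inclusion ker ψ ↪ G induces an injective homomorphism (ker ψ)_ab → G_ab on abelianizations; consequently the sequence 1 → (ker ψ)_ab → G_ab → ℤ^k → 1 is a short exact sequence of abelian groups. (Proposition 7.2, under condition (2).) -/

import Mathlib

open scoped commutatorElement

private lemma comm_aux {M : Type*} [Group M] {x y u v : M}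
    (huy : Commute u y) (huv : Commute u v) (hvx : Commute v x) :
    ⁅x * u, y * v⁆ = ⁅x, y⁆ := by
  simp only [commutatorElement_def, mul_inv_rev]
  calc x * u * (y * v) * (u⁻¹ * x⁻¹) * (v⁻¹ * y⁻¹)
      = x * (u * y) * (v * u⁻¹) * x⁻¹ * v⁻¹ * y⁻¹ := by group
    _ = x * (y * u) * (u⁻¹ * v) * x⁻¹ * v⁻¹ * y⁻¹ := by rw [huy.eq, ← huv.inv_left.eq]
    _ = x * y * (v * x⁻¹) * v⁻¹ * y⁻¹ := by group
    _ = x * y * (x⁻¹ * v) * v⁻¹ * y⁻¹ := by rw [hvx.inv_right.eq]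
    _ = x * y * x⁻¹ * y⁻¹ := by group


/-- Proposition 7.2 (condition (2)): if `ψ : G₁ × ⋯ × G_r → ℤ^k` is an epimorphism whose
restriction to at least three distinct factors is surjective, then the inclusion
`ker ψ ↪ G` induces an injection on abelianizations, yielding a short exact sequence
`1 → (ker ψ)_ab → G_ab → ℤ^k → 1`. -/
theorem stmt_9 {k r : ℕ} (hk : 1 ≤ k) (hr : 3 ≤ r)
    (G : Fin r → Type*) [∀ i, Group (G i)]
    (ψ : (∀ i, G i) →* Multiplicative (Fin k → ℤ)) (hψ : Function.Surjective ψ)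
    (i₁ i₂ i₃ : Fin r) (h12 : i₁ ≠ i₂) (h13 : i₁ ≠ i₃) (h23 : i₂ ≠ i₃)
    (hs : ∀ i ∈ ({i₁, i₂, i₃} : Set (Fin r)),
      Function.Surjective (ψ.comp (MonoidHom.mulSingle G i))) :
    Function.Injective (Abelianization.map ψ.ker.subtype) ∧
    (Abelianization.map ψ.ker.subtype).range = (Abelianization.lift ψ).ker ∧
    Function.Surjective (Abelianization.lift ψ) := by
  set K := ψ.ker with hK
  set L : Subgroup (∀ i, G i) := (commutator ↥K).map K.subtype with hL
  -- key claim: commutator G ≤ L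
  have key : commutator (∀ i, G i) ≤ L := by
    -- single-factor commutators lie in L
    have single : ∀ (i : Fin r) (a b : G i),
        ⁅Pi.mulSingle i a, Pi.mulSingle i b⁆ ∈ L := by
      intro i a b
      -- choose two surjective indices different from i
      obtain ⟨j, l, hjl, hji, hli, hjmem, hlmem⟩ :
          ∃ j l : Fin r, j ≠ l ∧ j ≠ i ∧ l ≠ i ∧
            j ∈ ({i₁, i₂, i₃} : Set (Fin r)) ∧ l ∈ ({i₁, i₂, i₃} : Set (Fin r)) := by
        by_cases h1 : i = i₁
        · exact ⟨i₂, i₃, h23, by simp [h1, (Ne.symm h12)], by simp [h1, (Ne.symm h13)],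
            by simp, by simp⟩
        by_cases h2 : i = i₂
        · exact ⟨i₁, i₃, h13, by simp [h2, h12], by simp [h2, (Ne.symm h23)],
            by simp, by simp⟩
        · exact ⟨i₁, i₂, h12, fun h => h1 h.symm, fun h => h2 h.symm, by simp, by simp⟩
      obtain ⟨u, hu⟩ := hs j hjmem (ψ (Pi.mulSingle i a))⁻¹
      obtain ⟨v, hv⟩ := hs l hlmem (ψ (Pi.mulSingle i b))⁻¹
      simp only [MonoidHom.comp_apply, MonoidHom.mulSingle_apply] at hu hv
      set p : ∀ m, G m := Pi.mulSingle i a * Pi.mulSingle j u with hp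
      set q : ∀ m, G m := Pi.mulSingle i b * Pi.mulSingle l v with hq
      have hpK : p ∈ K := by
        simp [hp, hK, MonoidHom.mem_ker, map_mul, hu]
      have hqK : q ∈ K := by
        simp [hq, hK, MonoidHom.mem_ker, map_mul, hv]
      have hcomm : ⁅p, q⁆ = ⁅Pi.mulSingle i a, Pi.mulSingle i b⁆ := by
        refine comm_aux ?_ ?_ ?_
        · exact Pi.mulSingle_commute hji u b
        · exact Pi.mulSingle_commute hjl u v
        · exact Pi.mulSingle_commute hli v a
      rw [← hcomm]
      refine ⟨⁅(⟨p, hpK⟩ : K), (⟨q, hqK⟩ : K)⁆, ?_, rfl⟩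
      exact Subgroup.commutator_mem_commutator (Subgroup.mem_top _) (Subgroup.mem_top _)
    -- commutator of the product is the product of commutators
    have hpi : commutator (∀ i, G i) =
        Subgroup.pi Set.univ fun i => commutator (G i) := by
      rw [commutator_def, ← Subgroup.pi_top Set.univ, Subgroup.commutator_pi_pi_of_finite]
      rfl
    rw [hpi]
    intro g hg
    rw [← Finset.noncommProd_mulSingle g]
    refine Subgroup.noncommProd_mem _ _ fun i _ => ?_
    -- mulSingle i (g i) ∈ L
    have hgi : g i ∈ commutator (G i) := hg i (Set.mem_univ i)
    have : Pi.mulSingle i (g i) ∈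
        (commutator (G i)).map (MonoidHom.mulSingle G i) :=
      Subgroup.mem_map_of_mem _ hgi
    revert this
    refine fun h => ?_
    have hle : (commutator (G i)).map (MonoidHom.mulSingle G i) ≤ L := by
      rw [commutator_def, Subgroup.map_commutator]
      rw [Subgroup.commutator_le]
      rintro x ⟨a, -, rfl⟩ y ⟨b, -, rfl⟩
      exact single i a b
    exact hle h
  -- Now derive the three statements.
  have hinj : Function.Injective (Abelianization.map K.subtype) := by
    rw [← MonoidHom.ker_eq_bot_iff]
    rw [Subgroup.eq_bot_iff_forall]
    intro x hx
    refine QuotientGroup.induction_on x (fun s hs1 => ?_) hx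
    -- hs1 : map (of s) = 1
    have h1 : Abelianization.of (K.subtype s) = 1 := by
      exact hs1
    have h2 : (s : ∀ i, G i) ∈ commutator (∀ i, G i) := by
      rwa [← QuotientGroup.eq_one_iff]
    obtain ⟨t, ht, hts⟩ := key h2
    have : t = s := Subtype.ext hts
    subst this
    exact (QuotientGroup.eq_one_iff _).mpr ht
  refine ⟨hinj, ?_, ?_⟩
  · ext x
    constructor
    · rintro ⟨y, rfl⟩
      refine QuotientGroup.induction_on y (fun s => ?_)
      simp [MonoidHom.mem_ker, Abelianization.map_of]
      have : ψ (K.subtype s) = 1 := s.2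
      exact this
    · intro hx
      refine QuotientGroup.induction_on x (fun g hg => ?_) hx
      have hgk : g ∈ K := hg
      exact ⟨Abelianization.of (⟨g, hgk⟩ : K), rfl⟩
  · intro z
    obtain ⟨g, hg⟩ := hψ z
    exact ⟨Abelianization.of g, by simpa using hg⟩
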